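/- arXiv:2301.09892 — 3 statements merged into one kernel-verified Lean document; each statement's English description precedes it below -/
import Mathlib

section
/- Let X be a finite nonempty set, μ a fully supported probability mass function on X, r : X → ℝ, and let D be μ-distributed and K, conditionally on D = c, be geometric with parameter μ(c) (support {1,2,...}) and independent of the reward. Then E[K · r(D) · 1{D = c}] = r(c) for every c ∈ X. -/
/-- Importance weighting combined with Geometric Resampling: if `D ~ μ` (fully supported)
and, conditionally on `D = d`, `K` is geometric with parameter `μ d` (independent of the
reward), then `E[K · r(D) · 1{D = c}] = r c`. The conditional expectation of `K` is
written out as the geometric series `∑ (k+1)(1-μ d)^k μ d`. -/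
theorem stmt4 {X : Type*} [Fintype X] [Nonempty X] [DecidableEq X]
    (μ : X → ℝ) (hpos : ∀ c, 0 < μ c) (hle : ∀ c, μ c ≤ 1) (hsum : ∑ c, μ c = 1)
    (r : X → ℝ) (c : X) :
    ∑ d, μ d * ((∑' k : ℕ, ((k : ℝ) + 1) * ((1 - μ d) ^ k * μ d))
        * (r d * (if d = c then 1 else 0))) = r c := by
  rw [Finset.sum_eq_single c]
  · have hp := hpos c
    have hx : ‖(1 - μ c)‖ < 1 := by
      rw [Real.norm_eq_abs, abs_lt]; constructor <;> nlinarith [hle c]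
    have hx0 : (1 : ℝ) - (1 - μ c) = μ c := by ring
    have h1 : ∑' k : ℕ, ((k : ℝ) + 1) * ((1 - μ c) ^ k * μ c)
        = (∑' k : ℕ, ((k : ℝ) + 1) * (1 - μ c) ^ k) * μ c := by
      rw [← tsum_mul_right]; exact tsum_congr fun k => by ring
    have h2 : ∑' k : ℕ, ((k : ℝ) + 1) * (1 - μ c) ^ k
        = (∑' k : ℕ, (k : ℝ) * (1 - μ c) ^ k) + ∑' k : ℕ, (1 - μ c) ^ k := by
      rw [← Summable.tsum_add ((hasSum_coe_mul_geometric_of_norm_lt_one hx).summable)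
        (summable_geometric_of_norm_lt_one hx)]
      exact tsum_congr fun k => by ring
    rw [h1, h2, tsum_coe_mul_geometric_of_norm_lt_one hx,
      tsum_geometric_of_norm_lt_one hx, hx0, if_pos rfl]
    field_simp
    ring
  · intro d _ hd
    simp [hd]
  · intro h; exact absurd (Finset.mem_univ c) h
end

section
/- Let V be a finite set of n vulnerabilities with values val : V → ℝ≥0 and weights w : V → ℝ≥0, and budget W ≥ 0. In the one-configuration, n-attacker-type CHOOSE-VUL instance where attacker type ψ_i has reward estimate r_{v_j, ψ_i} = -val(v_i) if i = j and 0 otherwise, each type attacks with probability 1/n, prices equal weights, and fixing a set S sets r^S_{v,ψ} = 0 for v ∈ S: the objective max over feasible S of (1/n)·Σ_i r^S_{v_i,ψ_i} equals (1/n)·(max over S with Σ_{v∈S} w(v) ≤ W of Σ_{v∈S} val(v)) minus (1/n)·Σ_i val(v_i). In particular, a feasible set S achieves objective value at least (K - Σ_i val(v_i))/n if and only if Σ_{v∈S} val(v) ≥ K. -/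
/-- KNAPSACK reduction for single-configuration CHOOSE-VUL: with `n` attacker types each
attacking with probability `1/n`, rewards `r_{v_j,ψ_i} = -val v_i` iff `i = j`, prices
equal to weights and budget `W`, the CHOOSE-VUL objective over feasible sets `S` is an
affine transformation of the knapsack value; in particular `S` achieves objective value
at least `(K - Σ val)/n` iff its knapsack value is at least `K`. -/
theorem stmt6 (n : ℕ) (hn : 1 ≤ n) (val w : Fin n → ℝ)
    (hval : ∀ i, 0 ≤ val i) (hw : ∀ i, 0 ≤ w i) (W : ℝ) (hW : 0 ≤ W)
    (F : Finset (Finset (Fin n)))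
    (hFdef : F = Finset.univ.filter (fun S : Finset (Fin n) => ∑ v ∈ S, w v ≤ W))
    (hF : F.Nonempty) :
    F.sup' hF (fun S => (1 / (n : ℝ)) * ∑ i, (if i ∈ S then 0 else -val i))
      = (1 / (n : ℝ)) * F.sup' hF (fun S => ∑ v ∈ S, val v)
        - (1 / (n : ℝ)) * ∑ i, val i
    ∧ ∀ S ∈ F, ∀ K : ℝ,
        ((K - ∑ i, val i) / (n : ℝ)
            ≤ (1 / (n : ℝ)) * ∑ i, (if i ∈ S then 0 else -val i)
          ↔ K ≤ ∑ v ∈ S, val v) := by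
  have hnpos : (0:ℝ) < n := by exact_mod_cast hn
  have hc : (0:ℝ) < 1 / n := by positivity
  have hsum : ∀ S : Finset (Fin n),
      (∑ i, (if i ∈ S then 0 else -val i)) = (∑ v ∈ S, val v) - ∑ i, val i := by
    intro S
    have : ∀ i : Fin n, (if i ∈ S then 0 else -val i)
        = (if i ∈ S then val i else 0) - val i := by
      intro i; by_cases h : i ∈ S <;> simp [h]
    rw [Finset.sum_congr rfl fun i _ => this i, Finset.sum_sub_distrib,
      Finset.sum_ite_mem, Finset.univ_inter]
  constructor
  · have hfun : ∀ S : Finset (Fin n),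
        (1 / (n : ℝ)) * ∑ i, (if i ∈ S then 0 else -val i)
          = (fun x : ℝ => (1 / (n : ℝ)) * x - (1 / (n : ℝ)) * ∑ i, val i)
              (∑ v ∈ S, val v) := by
      intro S; rw [hsum]; ring
    calc F.sup' hF (fun S => (1 / (n : ℝ)) * ∑ i, (if i ∈ S then 0 else -val i))
        = F.sup' hF ((fun x : ℝ => (1 / (n : ℝ)) * x - (1 / (n : ℝ)) * ∑ i, val i)
            ∘ (fun S => ∑ v ∈ S, val v)) := by
          exact Finset.sup'_congr hF rfl fun S _ => hfun S
      _ = (fun x : ℝ => (1 / (n : ℝ)) * x - (1 / (n : ℝ)) * ∑ i, val i)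
            (F.sup' hF (fun S => ∑ v ∈ S, val v)) := by
          refine (Finset.comp_sup'_eq_sup'_comp hF _ fun x y => ?_).symm
          rcases le_total x y with h | h
          · have h2 := mul_le_mul_of_nonneg_left h hc.le
            rw [sup_eq_right.mpr h, sup_eq_right.mpr (by linarith)]
          · have h2 := mul_le_mul_of_nonneg_left h hc.le
            rw [sup_eq_left.mpr h, sup_eq_left.mpr (by linarith)]
  · intro S _ K
    rw [hsum]
    rw [div_le_iff₀ hnpos]
    have key : 1/(n:ℝ) * ((∑ v ∈ S, val v) - ∑ i, val i) * n
        = (∑ v ∈ S, val v) - ∑ i, val i := by field_simp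
    rw [key]
    constructor <;> intro h <;> linarith
end

section
/- Let V be a finite set with reward estimates r : V → ℝ (all rewards ≤ 0), prices p : V → ℝ≥0 and budget b ≥ 0. Consider the problem: maximize over S ⊆ V with Σ_{v∈S} p(v) ≤ b the value min_{v ∈ V} r^S(v), where r^S(v) = 0 if v ∈ S and r(v) otherwise (with the convention min over empty complement = 0). Then the greedy algorithm that repeatedly adds the vulnerability with the minimum current r^S value (breaking ties by least price) as long as the budget permits returns an optimal solution. -/
open Finset

/-- Pick the element of `T` minimizing `r`, breaking ties by least price `p`
(and then by the linear order on `α`). -/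
noncomputable def pickMin {α : Type*} [Fintype α] [LinearOrder α] (r p : α → ℝ)
    (T : Finset α) (h : T.Nonempty) : α :=
  (ofLex ((ofLex ((T.image fun v => toLex ((r v : ℝ), toLex (p v, v)))).min'
    (h.image _))).2).2

/-- The greedy loop: repeatedly add the minimum-reward (least-price tie-break)
vulnerability among those not yet chosen, as long as the budget permits. -/
noncomputable def greedyAux {α : Type*} [Fintype α] [LinearOrder α]
    (r p : α → ℝ) (b : ℝ) : ℕ → Finset α → Finset α
  | 0, S => S
  | (n + 1), S =>
    if h : (Finset.univ \ S).Nonempty then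
      let v := pickMin r p (Finset.univ \ S) h
      if (∑ u ∈ S, p u) + p v ≤ b then greedyAux r p b n (insert v S) else S
    else S

/-- The set returned by the greedy algorithm. -/
noncomputable def greedySet {α : Type*} [Fintype α] [LinearOrder α]
    (r p : α → ℝ) (b : ℝ) : Finset α :=
  greedyAux r p b (Fintype.card α) ∅

/-- The CHOOSE-VUL objective `min_{v ∈ V} r^S(v)` where `r^S(v) = 0` for `v ∈ S`:
equivalently the minimum of `r` over `V \ S`, with the convention that the minimum
over an empty complement is `0`. -/
noncomputable def objVal {α : Type*} [Fintype α] [DecidableEq α]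
    (r : α → ℝ) (S : Finset α) : ℝ :=
  if h : (Finset.univ \ S).Nonempty then (Finset.univ \ S).inf' h r else 0

lemma pickMin_spec {α : Type*} [Fintype α] [LinearOrder α] (r p : α → ℝ)
    (T : Finset α) (h : T.Nonempty) :
    pickMin r p T h ∈ T ∧ ∀ v ∈ T, r (pickMin r p T h) ≤ r v := by
  have hne : (T.image fun v => toLex ((r v : ℝ), toLex (p v, v))).Nonempty :=
    h.image _
  obtain ⟨w, hw, hweq⟩ := Finset.mem_image.mp (Finset.min'_mem _ hne)
  have hpick : pickMin r p T h = w := by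
    exact congrArg (fun x => (ofLex (ofLex x).2).2) hweq.symm
  constructor
  · rw [hpick]; exact hw
  · intro v hv
    have := Finset.min'_le (T.image fun v => toLex ((r v : ℝ), toLex (p v, v)))
      _ (Finset.mem_image_of_mem _ hv)
    rw [← hweq, Prod.Lex.le_iff] at this
    rw [hpick]
    rcases this with h1 | ⟨h1, _⟩
    · exact le_of_lt h1
    · exact le_of_eq h1


lemma greedyAux_spec {α : Type*} [Fintype α] [LinearOrder α]
    (r p : α → ℝ) (hp : ∀ v, 0 ≤ p v) (b : ℝ) :
    ∀ n (S : Finset α), (Finset.univ \ S).card ≤ n → (∑ u ∈ S, p u) ≤ b →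
    S ⊆ greedyAux r p b n S ∧
    (∑ u ∈ greedyAux r p b n S, p u) ≤ b ∧
    (greedyAux r p b n S = Finset.univ ∨
      ∃ w, w ∉ greedyAux r p b n S ∧ (∀ v ∉ greedyAux r p b n S, r w ≤ r v) ∧
        b < (∑ u ∈ greedyAux r p b n S, p u) + p w) ∧
    (∀ g ∈ greedyAux r p b n S, g ∉ S → ∀ v ∉ greedyAux r p b n S, r g ≤ r v) := by
  intro n
  induction n with
  | zero =>
    intro S hcard hbud
    have hS : S = Finset.univ := by
      have : Finset.univ \ S = ∅ := Finset.card_eq_zero.mp (Nat.le_zero.mp hcard)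
      have := Finset.sdiff_eq_empty_iff_subset.mp this
      exact Finset.univ_subset_iff.mp this
    simp only [greedyAux]
    refine ⟨le_refl _, hbud, Or.inl hS, ?_⟩
    intro g hg hgS v hv
    exact absurd (hS ▸ Finset.mem_univ v) hv
  | succ n ih =>
    intro S hcard hbud
    by_cases h : (Finset.univ \ S).Nonempty
    · obtain ⟨hmem, hmin⟩ := pickMin_spec r p (Finset.univ \ S) h
      set v0 := pickMin r p (Finset.univ \ S) h with hv0
      have hv0S : v0 ∉ S := (Finset.mem_sdiff.mp hmem).2
      by_cases hfit : (∑ u ∈ S, p u) + p v0 ≤ b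
      · have hG : greedyAux r p b (n+1) S = greedyAux r p b n (insert v0 S) := by
          simp only [greedyAux, dif_pos h, if_pos hfit]
          exact if_pos hfit
        have hcard' : (Finset.univ \ insert v0 S).card ≤ n := by
          have : Finset.univ \ insert v0 S = (Finset.univ \ S).erase v0 := by
            ext x; simp [Finset.mem_sdiff, Finset.mem_erase, Finset.mem_insert, and_comm]
          rw [this, Finset.card_erase_of_mem hmem]
          omega
        have hbud' : (∑ u ∈ insert v0 S, p u) ≤ b := by
          rw [Finset.sum_insert hv0S]; linarith
        obtain ⟨hsub, hb', hstop, hminG⟩ := ih (insert v0 S) hcard' hbud'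
        rw [hG]
        refine ⟨Finset.Subset.trans (Finset.subset_insert _ _) hsub, hb', hstop, ?_⟩
        intro g hg hgS v hv
        by_cases hgi : g ∈ insert v0 S
        · have : g = v0 := by
            rcases Finset.mem_insert.mp hgi with h1 | h1
            · exact h1
            · exact absurd h1 hgS
          subst this
          have hvS : v ∈ Finset.univ \ S := by
            rw [Finset.mem_sdiff]
            exact ⟨Finset.mem_univ v, fun hc => hv (hsub (Finset.mem_insert_of_mem hc))⟩
          exact hmin v hvS
        · exact hminG g hg hgi v hv
      · have hG : greedyAux r p b (n+1) S = S := by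
          simp only [greedyAux, dif_pos h, if_neg hfit]
          exact if_neg hfit
        rw [hG]
        refine ⟨le_refl _, hbud, Or.inr ⟨v0, hv0S, ?_, by linarith [lt_of_not_ge hfit]⟩, ?_⟩
        · intro v hv
          exact hmin v (Finset.mem_sdiff.mpr ⟨Finset.mem_univ v, hv⟩)
        · intro g hg hgS v hv; exact absurd hg hgS
    · have hS : S = Finset.univ := by
        rw [Finset.not_nonempty_iff_eq_empty] at h
        exact Finset.univ_subset_iff.mp (Finset.sdiff_eq_empty_iff_subset.mp h)
      have hG : greedyAux r p b (n+1) S = S := by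
        simp only [greedyAux, dif_neg h]
      rw [hG]
      refine ⟨le_refl _, hbud, Or.inl hS, ?_⟩
      intro g hg hgS v hv
      exact absurd (hS ▸ Finset.mem_univ v) hv

lemma objVal_nonpos {α : Type*} [Fintype α] [DecidableEq α]
    (r : α → ℝ) (hr : ∀ v, r v ≤ 0) (S : Finset α) : objVal r S ≤ 0 := by
  rw [objVal]
  split
  · next h =>
    obtain ⟨x, hx⟩ := h
    exact le_trans (Finset.inf'_le r hx) (hr x)
  · exact le_refl 0

/-- Greedy optimality for single-attacker CHOOSE-VUL: with non-positive rewards,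
nonnegative prices and budget `b ≥ 0`, the greedy set is feasible and attains the
maximum objective value among all feasible sets. -/
theorem stmt7 {α : Type*} [Fintype α] [LinearOrder α] [Nonempty α]
    (r p : α → ℝ) (hr : ∀ v, r v ≤ 0) (hp : ∀ v, 0 ≤ p v) (b : ℝ) (hb : 0 ≤ b) :
    (∑ v ∈ greedySet r p b, p v ≤ b) ∧
    ∀ S : Finset α, ∑ v ∈ S, p v ≤ b → objVal r S ≤ objVal r (greedySet r p b) := by
  obtain ⟨hsub, hbG, hstop, hminG⟩ := greedyAux_spec r p hp b (Fintype.card α) ∅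
    (by simp) (by simpa using hb)
  set G : Finset α := greedyAux r p b (Fintype.card α) ∅ with hGdef
  have hGS : greedySet r p b = G := rfl
  rw [hGS]
  refine ⟨hbG, ?_⟩
  intro S hS
  rcases hstop with hU | ⟨w, hwG, hwmin, hwbud⟩
  · have : objVal r G = 0 := by
      rw [objVal, dif_neg]
      rw [hU]
      simp
    rw [this]
    exact objVal_nonpos r hr S
  · have hne : (Finset.univ \ G).Nonempty :=
      ⟨w, Finset.mem_sdiff.mpr ⟨Finset.mem_univ w, hwG⟩⟩
    have hGobj : objVal r G = r w := by
      rw [objVal, dif_pos hne]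
      apply le_antisymm
      · exact Finset.inf'_le r (Finset.mem_sdiff.mpr ⟨Finset.mem_univ w, hwG⟩)
      · exact Finset.le_inf' hne r fun x hx => hwmin x (Finset.mem_sdiff.mp hx).2
    by_contra hcon
    push_neg at hcon
    rw [hGobj] at hcon
    -- every x ∈ insert w G lies in S
    have hsubS : insert w G ⊆ S := by
      intro x hx
      have hrx : r x ≤ r w := by
        rcases Finset.mem_insert.mp hx with h1 | h1
        · exact le_of_eq (congrArg r h1)
        · exact hminG x h1 (Finset.notMem_empty x) w hwG
      by_contra hxS
      have hneS : (Finset.univ \ S).Nonempty :=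
        ⟨x, Finset.mem_sdiff.mpr ⟨Finset.mem_univ x, hxS⟩⟩
      have : objVal r S ≤ r x := by
        rw [objVal, dif_pos hneS]
        exact Finset.inf'_le r (Finset.mem_sdiff.mpr ⟨Finset.mem_univ x, hxS⟩)
      linarith
    have hcost : (∑ u ∈ insert w G, p u) ≤ ∑ u ∈ S, p u :=
      Finset.sum_le_sum_of_subset_of_nonneg hsubS fun v _ _ => hp v
    rw [Finset.sum_insert hwG] at hcost
    linarith
end
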